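/- Let m ≥ 2 and let (λᵢ), (μᵢ), (bᵢ) be real m-tuples satisfying: (i) λᵢ·δⱼᵏ + μᵢ·bⱼ·δⱼᵏ = λⱼ·δᵢᵏ + μⱼ·bᵢ·δᵢᵏ for all i,j,k (the symmetry relation for a diagonal B = diag(bᵢ)), where Σᵢ bᵢ = 0. Then for each i: λᵢ - (1/(m-1))·μᵢ·bᵢ = 0, and for each i ≠ j: λᵢ + μᵢ·bⱼ = 0; consequently μᵢ·(bⱼ + (1/(m-1))·bᵢ) = 0 for all i ≠ j. -/
import Mathlib


/-- the Cartan-lemma symmetry relation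
λᵢδⱼᵏ + μᵢbⱼδⱼᵏ = λⱼδᵢᵏ + μⱼbᵢδᵢᵏ with Σ bᵢ = 0 yields
λᵢ - (1/(m-1))μᵢbᵢ = 0, and λᵢ + μᵢbⱼ = 0 for i ≠ j, hence
μᵢ(bⱼ + (1/(m-1))bᵢ) = 0 for i ≠ j. -/
theorem stmt8 (m : ℕ) (hm : 2 ≤ m) (l μ b : Fin m → ℝ)
    (htr : ∑ i, b i = 0)
    (hsym : ∀ i j k : Fin m,
      l i * (if j = k then (1 : ℝ) else 0) + μ i * b j * (if j = k then (1 : ℝ) else 0)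
        = l j * (if i = k then (1 : ℝ) else 0) + μ j * b i * (if i = k then (1 : ℝ) else 0)) :
    (∀ i, l i - (1 / ((m : ℝ) - 1)) * μ i * b i = 0) ∧
    (∀ i j, i ≠ j → l i + μ i * b j = 0) ∧
    (∀ i j, i ≠ j → μ i * (b j + (1 / ((m : ℝ) - 1)) * b i) = 0) := by
  have key : ∀ i j : Fin m, i ≠ j → l i + μ i * b j = 0 := by
    intro i j hij
    have h := hsym i j j
    simpa [hij] using h
  have hm1 : ((m : ℝ) - 1) ≠ 0 := by
    have : (2 : ℝ) ≤ (m : ℝ) := by exact_mod_cast hm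
    linarith
  have first : ∀ i, l i - (1 / ((m : ℝ) - 1)) * μ i * b i = 0 := by
    intro i
    have hsum : ∑ j ∈ Finset.univ.erase i, (l i + μ i * b j) = 0 := by
      apply Finset.sum_eq_zero
      intro j hj
      exact key i j (Ne.symm (Finset.ne_of_mem_erase hj))
    have hcard : (Finset.univ.erase i).card = m - 1 := by
      simp [Finset.card_erase_of_mem]
    have hbsum : ∑ j ∈ Finset.univ.erase i, b j = - b i := by
      have := Finset.add_sum_erase Finset.univ b (Finset.mem_univ i)
      linarith [htr, this.symm ▸ htr]
    have hexp : ∑ j ∈ Finset.univ.erase i, (l i + μ i * b j)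
        = (m - 1 : ℕ) * l i + μ i * (∑ j ∈ Finset.univ.erase i, b j) := by
      rw [Finset.sum_add_distrib, Finset.sum_const, hcard, ← Finset.mul_sum]
      simp [nsmul_eq_mul]
    rw [hexp, hbsum] at hsum
    have hcast : ((m - 1 : ℕ) : ℝ) = (m : ℝ) - 1 := by
      have : 1 ≤ m := le_trans (by norm_num) hm
      push_cast [this]
      ring
    rw [hcast] at hsum
    field_simp
    linarith
  refine ⟨first, key, ?_⟩
  intro i j hij
  have h1 := key i j hij
  have h2 := first i
  have : μ i * b j + (1 / ((m : ℝ) - 1)) * μ i * b i = 0 := by linarith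
  linarith [this]
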